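/- arXiv:2004.04994 — 3 statements merged into one kernel-verified Lean document; each statement's English description precedes it below -/
import Mathlib

section
/- Let d be an odd prime and ω = exp(2πi/d). For the Wootters–Fields bases |ĵ_k⟩ = (1/√d) Σ_{m=0}^{d-1} ω^{jm+km²}|m⟩, any two bases with distinct labels k ≠ k' are mutually unbiased: |⟨ĵ_k | ĵ'_{k'}⟩|² = 1/d for all j, j' ∈ {0,...,d−1}. -/
open Finset Complex

lemma conj_stdAddChar {d : ℕ} [NeZero d] (x : ZMod d) :
    (starRingEnd ℂ) (ZMod.stdAddChar x) = ZMod.stdAddChar (-x) := by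
  have habs : ‖(ZMod.stdAddChar x : ℂ)‖ = 1 := by
    rw [ZMod.stdAddChar_apply]; exact Circle.norm_coe _
  have h1 : ZMod.stdAddChar x * ZMod.stdAddChar (-x) = 1 := by
    rw [← AddChar.map_add_eq_mul]; simp
  rw [eq_inv_of_mul_eq_one_right h1, Complex.inv_def, Complex.normSq_eq_norm_sq, habs]
  simp

/-- The squared norm of the generalized quadratic Gauss sum `∑ ψ(bx + cx²)` is `d`
when `d` is an odd prime and `c ≠ 0`. -/
lemma gauss_norm {d : ℕ} [NeZero d] (hd : d.Prime) (hodd : Odd d) (b c : ZMod d) (hc : c ≠ 0) :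
    (starRingEnd ℂ) (∑ x : ZMod d, ZMod.stdAddChar (b * x + c * x ^ 2)) *
      (∑ x : ZMod d, ZMod.stdAddChar (b * x + c * x ^ 2)) = d := by
  haveI : Fact d.Prime := ⟨hd⟩
  have h2 : (2 : ZMod d) ≠ 0 := by
    intro h
    have hdvd : (d : ℕ) ∣ 2 :=
      (ZMod.natCast_eq_zero_iff 2 d).mp (by exact_mod_cast h)
    have : d = 2 := (Nat.prime_dvd_prime_iff_eq hd Nat.prime_two).mp hdvd
    rw [this] at hodd
    exact (Nat.not_odd_iff_even.mpr (by norm_num)) hodd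
  have h1 : ∀ t : ZMod d, ∑ y : ZMod d, ZMod.stdAddChar (t * y)
      = if t = 0 then (d : ℂ) else 0 := by
    intro t
    split_ifs with h
    · simp [h, AddChar.map_zero_eq_one, Finset.card_univ, ZMod.card]
    · exact AddChar.sum_eq_zero_of_ne_one (ZMod.isPrimitive_stdAddChar d h)
  rw [map_sum]
  simp only [conj_stdAddChar]
  rw [Finset.sum_mul_sum]
  have step1 : ∑ y : ZMod d, ∑ x : ZMod d,
      ZMod.stdAddChar (-(b * y + c * y ^ 2)) * ZMod.stdAddChar (b * x + c * x ^ 2)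
      = ∑ y : ZMod d, ∑ t : ZMod d,
        ZMod.stdAddChar (b * t + c * t ^ 2) * ZMod.stdAddChar ((2 * c * t) * y) := by
    refine Finset.sum_congr rfl fun y _ => ?_
    rw [← Fintype.sum_equiv (Equiv.addLeft y)
      (fun t => ZMod.stdAddChar (b * t + c * t ^ 2) * ZMod.stdAddChar ((2 * c * t) * y))
      (fun x => ZMod.stdAddChar (-(b * y + c * y ^ 2)) * ZMod.stdAddChar (b * x + c * x ^ 2))]
    intro t
    rw [← AddChar.map_add_eq_mul, ← AddChar.map_add_eq_mul, Equiv.coe_addLeft]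
    congr 1
    ring
  rw [step1, Finset.sum_comm]
  have step2 : ∀ t : ZMod d, ∑ y : ZMod d,
      ZMod.stdAddChar (b * t + c * t ^ 2) * ZMod.stdAddChar ((2 * c * t) * y)
      = if t = 0 then (d : ℂ) else 0 := by
    intro t
    rw [← Finset.mul_sum, h1 (2 * c * t)]
    rcases eq_or_ne t 0 with rfl | ht
    · simp
    · have hne : 2 * c * t ≠ 0 := mul_ne_zero (mul_ne_zero h2 hc) ht
      simp [hne, ht]
  rw [Finset.sum_congr rfl fun t _ => step2 t]
  simp

/-- The Wootters–Fields basis vector `|ĵ_k⟩ = (1/√d) ∑_m ω^(jm+km²) |m⟩` in `ℂ^d`. -/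
noncomputable def wfVec (d : ℕ) (k j : Fin d) : EuclideanSpace ℂ (Fin d) :=
  WithLp.toLp 2 fun (m : Fin d) => ((1 / Real.sqrt d : ℝ) : ℂ) *
    Complex.exp (2 * Real.pi * Complex.I *
      (((j.val * m.val + k.val * m.val ^ 2 : ℕ) : ℂ)) / d)

lemma wfVec_eq (d : ℕ) [NeZero d] (k j : Fin d) (m : Fin d) :
    wfVec d k j m = ((1 / Real.sqrt d : ℝ) : ℂ) *
      ZMod.stdAddChar (((j.val * m.val + k.val * m.val ^ 2 : ℕ) : ZMod d)) := by
  have h := ZMod.stdAddChar_coe (N := d) ((j.val * m.val + k.val * m.val ^ 2 : ℕ) : ℤ)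
  rw [wfVec]
  push_cast at h ⊢
  rw [h]

theorem stmt_5 (d : ℕ) (hd : d.Prime) (hodd : Odd d) (k k' : Fin d) (hkk : k ≠ k')
    (j j' : Fin d) :
    ‖(inner ℂ (wfVec d k j) (wfVec d k' j') : ℂ)‖ ^ 2 = 1 / d := by
  haveI : NeZero d := ⟨hd.ne_zero⟩
  haveI : Fact d.Prime := ⟨hd⟩
  set ψ := ZMod.stdAddChar (N := d)
  set B : ZMod d := (j'.val : ZMod d) - (j.val : ZMod d) with hB
  set C : ZMod d := (k'.val : ZMod d) - (k.val : ZMod d) with hC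
  have hCne : C ≠ 0 := by
    rw [hC, sub_ne_zero]
    intro h
    apply hkk
    apply Fin.ext
    have := congrArg ZMod.val h
    rw [ZMod.val_cast_of_lt k'.isLt, ZMod.val_cast_of_lt k.isLt] at this
    exact this.symm
  have dpos : (0:ℝ) < d := by exact_mod_cast hd.pos
  -- inner product formula
  have hinner : (inner ℂ (wfVec d k j) (wfVec d k' j') : ℂ)
      = ((1 / d : ℝ) : ℂ) * ∑ x : ZMod d, ψ (B * x + C * x ^ 2) := by
    rw [PiLp.inner_apply]
    have hterm : ∀ m : Fin d, (inner ℂ (wfVec d k j m) (wfVec d k' j' m) : ℂ)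
        = ((1 / d : ℝ) : ℂ) * ψ (B * (m.val : ZMod d) + C * (m.val : ZMod d) ^ 2) := by
      intro m
      rw [RCLike.inner_apply', wfVec_eq, wfVec_eq, map_mul, Complex.conj_ofReal,
        conj_stdAddChar]
      have coeff : ((1 / Real.sqrt d : ℝ) : ℂ) * ((1 / Real.sqrt d : ℝ) : ℂ)
          = ((1 / d : ℝ) : ℂ) := by
        rw [← Complex.ofReal_mul]
        congr 1
        rw [div_mul_div_comm, Real.mul_self_sqrt dpos.le, one_mul]
      calc ((1 / Real.sqrt d : ℝ) : ℂ) *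
            ψ (-((j.val * m.val + k.val * m.val ^ 2 : ℕ) : ZMod d)) *
            (((1 / Real.sqrt d : ℝ) : ℂ) * ψ (((j'.val * m.val + k'.val * m.val ^ 2 : ℕ) : ZMod d)))
          = (((1 / Real.sqrt d : ℝ) : ℂ) * ((1 / Real.sqrt d : ℝ) : ℂ)) *
            (ψ (-((j.val * m.val + k.val * m.val ^ 2 : ℕ) : ZMod d)) *
             ψ (((j'.val * m.val + k'.val * m.val ^ 2 : ℕ) : ZMod d))) := by ring
        _ = ((1 / d : ℝ) : ℂ) * ψ (B * (m.val : ZMod d) + C * (m.val : ZMod d) ^ 2) := by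
            rw [coeff, ← AddChar.map_add_eq_mul]
            congr 1
            push_cast
            rw [hB, hC]
            ring
    rw [Finset.sum_congr rfl fun m _ => hterm m, ← Finset.mul_sum]
    congr 1
    apply Fintype.sum_bijective (fun m : Fin d => ((m.val : ZMod d)))
    · rw [Fintype.bijective_iff_injective_and_card]
      refine ⟨fun m m' h => Fin.ext ?_, by simp [ZMod.card]⟩
      have := congrArg ZMod.val h
      rwa [ZMod.val_cast_of_lt m.isLt, ZMod.val_cast_of_lt m'.isLt] at this
    · intro m; rfl
  rw [hinner]
  set S : ℂ := ∑ x : ZMod d, ψ (B * x + C * x ^ 2) with hS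
  have hgauss := gauss_norm hd hodd B C hCne
  have hnormSq : Complex.normSq S = d := by
    have : ((Complex.normSq S : ℝ) : ℂ) = (d : ℂ) := by
      rw [Complex.normSq_eq_conj_mul_self]; exact hgauss
    exact_mod_cast this
  rw [norm_mul, mul_pow, Complex.sq_norm, Complex.sq_norm, hnormSq,
    Complex.normSq_ofReal]
  field_simp
end

section
/- Let |Φ⟩ = Σ_n λ_n |n⟩⊗|n⟩ with λ_n ≥ 0, Σ_n λ_n² = 1, be a state in ℂ^d⊗ℂ^d with Schmidt coefficients arranged so that λ_{i_0} ≥ λ_{i_1} ≥ ... ≥ λ_{i_{d−1}}. If ρ is a density matrix on ℂ^d⊗ℂ^d with Schmidt number at most r, then F(ρ,Φ) = ⟨Φ|ρ|Φ⟩ ≤ Σ_{m=0}^{r−1} λ_{i_m}². -/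
open Matrix
open scoped ComplexOrder

/-- A pure state `ψ` on `ℂ^d ⊗ ℂ^d` has Schmidt rank at most `r` if it can be written
as a sum of `r` product terms. -/
def SchmidtRankLE (d r : ℕ) (ψ : Fin d × Fin d → ℂ) : Prop :=
  ∃ a b : Fin r → Fin d → ℂ, ∀ p : Fin d × Fin d, ψ p = ∑ i : Fin r, a i p.1 * b i p.2

/-- A mixed state `ρ` on `ℂ^d ⊗ ℂ^d` has Schmidt number at most `r` if it admits a
decomposition into pure states each of Schmidt rank at most `r`. -/
def SchmidtNumberLE (d r : ℕ) (ρ : Matrix (Fin d × Fin d) (Fin d × Fin d) ℂ) : Prop :=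
  ∃ (N : ℕ) (p : Fin N → ℝ) (ψ : Fin N → (Fin d × Fin d → ℂ)),
    (∀ i, 0 ≤ p i) ∧
    (∀ i, star (ψ i) ⬝ᵥ ψ i = 1) ∧
    (∀ i, SchmidtRankLE d r (ψ i)) ∧
    ρ = ∑ i : Fin N, ((p i : ℂ)) • Matrix.vecMulVec (ψ i) (star (ψ i))


lemma bathtub (d r : ℕ) (lam : Fin d → ℝ) (hlam : ∀ n, 0 ≤ lam n)
    (hsorted : ∀ i j : Fin d, i ≤ j → lam j ≤ lam i)
    (t : Fin d → ℝ) (ht0 : ∀ n, 0 ≤ t n) (ht1 : ∀ n, t n ≤ 1)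
    (htsum : ∑ n, t n ≤ r) :
    ∑ n, t n * lam n ^ 2 ≤ ∑ m : Fin d, (if m.val < r then lam m ^ 2 else 0) := by
  rcases le_or_gt d r with hdr | hrd
  · have : ∀ m : Fin d, (if m.val < r then lam m ^ 2 else 0) = lam m ^ 2 := by
      intro m; rw [if_pos (lt_of_lt_of_le m.isLt hdr)]
    simp only [this]
    exact Finset.sum_le_sum fun n _ => by nlinarith [ht1 n, ht0 n, sq_nonneg (lam n)]
  · set c : ℝ := lam ⟨r, hrd⟩ ^ 2 with hc
    have hcn : 0 ≤ c := sq_nonneg _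
    have key : ∀ n : Fin d, t n * lam n ^ 2 - (if n.val < r then lam n ^ 2 else 0)
        ≤ (t n - (if n.val < r then 1 else 0)) * c := by
      intro n
      by_cases h : n.val < r
      · simp only [if_pos h]
        have h1 : c ≤ lam n ^ 2 := by
          have := hsorted n ⟨r, hrd⟩ (by simp [Fin.le_def]; omega)
          nlinarith [hlam n, hlam ⟨r, hrd⟩]
        nlinarith [ht1 n]
      · simp only [if_neg h]
        have h1 : lam n ^ 2 ≤ c := by
          have := hsorted ⟨r, hrd⟩ n (by simp [Fin.le_def]; omega)
          nlinarith [hlam n, hlam ⟨r, hrd⟩]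
        nlinarith [ht0 n]
    have hsum := Finset.sum_le_sum (fun n (_ : n ∈ Finset.univ) => key n)
    rw [Finset.sum_sub_distrib] at hsum
    have hind : ∑ n : Fin d, (if n.val < r then (1:ℝ) else 0) = r := by
      rw [Fin.sum_univ_eq_sum_range (fun n => if n < r then (1:ℝ) else 0)]
      rw [Finset.sum_ite, Finset.sum_const, Finset.sum_const]
      have : (Finset.range d).filter (· < r) = Finset.range r := by
        ext n; simp; omega
      simp [this]
    have hrhs : ∑ n : Fin d, (t n - (if n.val < r then 1 else 0)) * c ≤ 0 := by
      rw [← Finset.sum_mul, Finset.sum_sub_distrib, hind]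
      have : ∑ n, t n - (r:ℝ) ≤ 0 := by linarith
      exact mul_nonpos_of_nonpos_of_nonneg this hcn
    linarith

lemma pure_bound (d r : ℕ) (lam : Fin d → ℝ)
    (ψ : Fin d × Fin d → ℂ) (hψn : star ψ ⬝ᵥ ψ = 1) (hψr : SchmidtRankLE d r ψ)
    (Φ : Fin d × Fin d → ℂ)
    (hΦ : ∀ p : Fin d × Fin d, Φ p = if p.1 = p.2 then ((lam p.1 : ℝ) : ℂ) else 0) :
    ∃ (k : ℕ) (t : Fin d → ℝ), k ≤ r ∧ (∀ n, 0 ≤ t n) ∧ (∀ n, t n ≤ 1) ∧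
      (∑ n, t n = k) ∧
      Complex.normSq (star Φ ⬝ᵥ ψ) ≤ ∑ n : Fin d, t n * lam n ^ 2 := by
  classical
  obtain ⟨a, b, hab⟩ := hψr
  set E := EuclideanSpace ℂ (Fin d)
  let bE : Fin r → E := fun i => WithLp.toLp 2 (b i)
  set S : Submodule ℂ E := Submodule.span ℂ (Set.range bE) with hS
  set k := Module.finrank ℂ S with hkdef
  have hk : k ≤ r := by
    simpa [hkdef, Set.finrank] using finrank_range_le_card (R := ℂ) bE
  let u : OrthonormalBasis (Fin k) ℂ S := stdOrthonormalBasis ℂ S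
  let U : Fin k → E := fun j => S.subtypeₗᵢ (u j)
  have hU : Orthonormal ℂ U := u.orthonormal.comp_linearIsometry S.subtypeₗᵢ
  have hmem : ∀ i, bE i ∈ S := fun i => Submodule.subset_span (Set.mem_range_self i)
  let coef : Fin r → Fin k → ℂ := fun i j => u.repr ⟨bE i, hmem i⟩ j
  have hrepr : ∀ i m, b i m = ∑ j, coef i j * U j m := by
    intro i m
    have h := u.sum_repr ⟨bE i, hmem i⟩
    have h2 : (∑ j, coef i j • U j : E) = bE i := by
      have hc := congrArg (fun x : S => (x : E)) h
      dsimp only at hc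
      rw [← hc]
      simp [U, coef]
    have h3 := congrFun (congrArg WithLp.ofLp h2) m
    rw [WithLp.ofLp_sum, Finset.sum_apply m Finset.univ _] at h3
    simp only [bE, WithLp.ofLp_toLp] at h3
    rw [← h3]
    exact Finset.sum_congr rfl fun j _ => rfl
  let c : Fin k → Fin d → ℂ := fun j n => ∑ i, a i n * coef i j
  have hψ : ∀ p : Fin d × Fin d, ψ p = ∑ j, c j p.1 * U j p.2 := by
    intro p
    rw [hab p]
    simp only [c]
    have : ∀ i, a i p.1 * b i p.2 = ∑ j, a i p.1 * (coef i j * U j p.2) := by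
      intro i; rw [hrepr i p.2, Finset.mul_sum]
    rw [Finset.sum_congr rfl fun i _ => this i]
    simp only [Finset.mul_sum, Finset.sum_mul, mul_assoc]
    rw [Finset.sum_comm]
  -- orthonormality sums
  have hUo : ∀ j j' : Fin k, ∑ m, (starRingEnd ℂ) (U j m) * U j' m
      = if j = j' then 1 else 0 := by
    intro j j'
    have := orthonormal_iff_ite.mp hU j j'
    rw [← this, PiLp.inner_apply]
    simp [RCLike.inner_apply, mul_comm]
  -- norm of psi in terms of c
  have h1 : ∑ p : Fin d × Fin d, (starRingEnd ℂ) (ψ p) * ψ p = 1 := by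
    simpa [dotProduct] using hψn
  have hrow : ∀ n n' : Fin d, ∑ m, (starRingEnd ℂ) (ψ (n, m)) * ψ (n', m)
      = ∑ j, (starRingEnd ℂ) (c j n) * c j n' := by
    intro n n'
    calc ∑ m, (starRingEnd ℂ) (ψ (n, m)) * ψ (n', m)
        = ∑ m, ∑ j, ∑ j', ((starRingEnd ℂ) (c j n) * c j' n')
            * ((starRingEnd ℂ) (U j m) * U j' m) := by
          refine Finset.sum_congr rfl fun m _ => ?_
          rw [hψ (n, m), hψ (n', m), map_sum, Finset.sum_mul_sum]
          refine Finset.sum_congr rfl fun j _ => Finset.sum_congr rfl fun j' _ => ?_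
          simp only [_root_.map_mul]; ring
      _ = ∑ j, ∑ j', ((starRingEnd ℂ) (c j n) * c j' n')
            * ∑ m, ((starRingEnd ℂ) (U j m) * U j' m) := by
          rw [Finset.sum_comm]
          refine Finset.sum_congr rfl fun j _ => ?_
          rw [Finset.sum_comm]
          exact Finset.sum_congr rfl fun j' _ => (Finset.mul_sum _ _ _).symm
      _ = ∑ j, (starRingEnd ℂ) (c j n) * c j n' := by
          simp [hUo, mul_ite]
  have hC' : ∑ n : Fin d, ∑ j, (starRingEnd ℂ) (c j n) * c j n = 1 := by
    rw [Fintype.sum_prod_type] at h1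
    rw [← h1]
    exact Finset.sum_congr rfl fun n _ => (hrow n n).symm
  have hCr : ∑ n : Fin d, ∑ j, Complex.normSq (c j n) = 1 := by
    have h2 := congrArg Complex.re hC'
    simpa [Complex.re_sum, Complex.normSq_eq_conj_mul_self, Complex.normSq_apply] using h2
  -- the value
  have hval : star Φ ⬝ᵥ ψ = ∑ n : Fin d, ∑ j, (lam n : ℂ) * (c j n * U j n) := by
    have : star Φ ⬝ᵥ ψ = ∑ p : Fin d × Fin d,
        (if p.1 = p.2 then ((lam p.1 : ℝ) : ℂ) else 0) * ψ p := by
      refine Finset.sum_congr rfl fun p _ => ?_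
      rw [Pi.star_apply, hΦ p]
      simp [apply_ite (starRingEnd ℂ), Complex.conj_ofReal]
    rw [this, Fintype.sum_prod_type]
    refine Finset.sum_congr rfl fun n _ => ?_
    rw [Finset.sum_eq_single n (by intro m _ h; simp [Ne.symm h]) (by simp)]
    rw [if_pos rfl, hψ (n, n), Finset.mul_sum]
  -- Cauchy-Schwarz
  set F := EuclideanSpace ℂ (Fin d × Fin k)
  set X : F := WithLp.toLp 2 (fun p => (lam p.1 : ℂ) * (starRingEnd ℂ) (U p.2 p.1) : (Fin d × Fin k) → ℂ) with hX
  set Y : F := WithLp.toLp 2 (fun p => c p.2 p.1 : (Fin d × Fin k) → ℂ) with hY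
  have hXY : (inner ℂ X Y : ℂ) = star Φ ⬝ᵥ ψ := by
    rw [hval, PiLp.inner_apply, Fintype.sum_prod_type]
    refine Finset.sum_congr rfl fun n _ => Finset.sum_congr rfl fun j _ => ?_
    simp only [hX, hY, RCLike.inner_apply, _root_.map_mul, Complex.conj_conj, Complex.conj_ofReal]
    ring
  set t : Fin d → ℝ := fun n => ∑ j, Complex.normSq (U j n) with ht
  have hYn : ‖Y‖ ^ 2 = 1 := by
    rw [PiLp.norm_sq_eq_of_L2, Fintype.sum_prod_type]
    rw [← hCr]
    exact Finset.sum_congr rfl fun n _ => Finset.sum_congr rfl fun j _ => by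
      simp [hY, ← Complex.sq_norm]
  have hXn : ‖X‖ ^ 2 = ∑ n, t n * lam n ^ 2 := by
    rw [PiLp.norm_sq_eq_of_L2, Fintype.sum_prod_type]
    refine Finset.sum_congr rfl fun n _ => ?_
    rw [ht, Finset.sum_mul]
    refine Finset.sum_congr rfl fun j _ => ?_
    simp only [hX]
    rw [norm_mul, mul_pow, RCLike.norm_conj]
    rw [Complex.norm_real, Real.norm_eq_abs, sq_abs]
    rw [Complex.sq_norm, mul_comm]
  -- Bessel / trace facts about t
  have ht0 : ∀ n, 0 ≤ t n := fun n => Finset.sum_nonneg fun j _ => Complex.normSq_nonneg _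
  have ht1 : ∀ n, t n ≤ 1 := by
    intro n
    have hb := hU.sum_inner_products_le (EuclideanSpace.single n (1:ℂ)) (s := Finset.univ)
    have hs : ‖EuclideanSpace.single n (1:ℂ)‖ = 1 := by
      rw [EuclideanSpace.norm_single]; simp
    rw [hs] at hb
    calc t n = ∑ j, ‖(inner ℂ (U j) (EuclideanSpace.single n (1:ℂ)) : ℂ)‖ ^ 2 := by
          refine Finset.sum_congr rfl fun j _ => ?_
          rw [EuclideanSpace.inner_single_right, one_mul, RCLike.norm_conj,
            Complex.sq_norm]
      _ ≤ 1 ^ 2 := hb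
      _ = 1 := one_pow 2
  have htsum : ∑ n, t n = k := by
    rw [ht, Finset.sum_comm]
    have hnu : ∀ j, ∑ n, Complex.normSq (U j n) = 1 := by
      intro j
      have h2 := congrArg Complex.re (hUo j j)
      simpa [Complex.re_sum, Complex.normSq_eq_conj_mul_self, Complex.normSq_apply] using h2
    simp [hnu]
  -- assemble
  refine ⟨k, t, hk, ht0, ht1, htsum, ?_⟩
  have hcs := norm_inner_le_norm (𝕜 := ℂ) X Y
  have h3 : ‖(inner ℂ X Y : ℂ)‖ ^ 2 ≤ ‖X‖ ^ 2 * ‖Y‖ ^ 2 := by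
    rw [← mul_pow]
    exact pow_le_pow_left₀ (norm_nonneg _) hcs 2
  rw [hXn, hYn, mul_one] at h3
  calc Complex.normSq (star Φ ⬝ᵥ ψ) = ‖(inner ℂ X Y : ℂ)‖ ^ 2 := by
        rw [hXY, Complex.sq_norm]
    _ ≤ ∑ n, t n * lam n ^ 2 := h3


lemma triple_swap {α β γ : Type*} [Fintype α] [Fintype β] [Fintype γ]
    (f : α → β → γ → ℂ) :
    ∑ q : α, ∑ q' : β, ∑ i : γ, f q q' i = ∑ i : γ, ∑ q' : β, ∑ q : α, f q q' i := by
  have h1 : ∀ q : α, ∑ q' : β, ∑ i : γ, f q q' i = ∑ i : γ, ∑ q' : β, f q q' i :=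
    fun q => Finset.sum_comm
  simp_rw [h1]
  rw [Finset.sum_comm]
  exact Finset.sum_congr rfl fun i _ => Finset.sum_comm

lemma fid_expand (d N : ℕ) (pc : Fin N → ℂ) (ψ : Fin N → (Fin d × Fin d → ℂ))
    (Φ : Fin d × Fin d → ℂ) :
    star Φ ⬝ᵥ (∑ i : Fin N, pc i • Matrix.vecMulVec (ψ i) (star (ψ i))) *ᵥ Φ
      = ∑ i : Fin N, pc i * ((star Φ ⬝ᵥ ψ i) * (star (ψ i) ⬝ᵥ Φ)) := by
  simp only [dotProduct, Matrix.mulVec, Pi.star_apply, RCLike.star_def, Matrix.sum_apply,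
    Matrix.smul_apply, Matrix.vecMulVec_apply, smul_eq_mul, Finset.mul_sum, Finset.sum_mul]
  rw [triple_swap]
  refine Finset.sum_congr rfl fun i _ => Finset.sum_congr rfl fun q' _ =>
    Finset.sum_congr rfl fun q _ => ?_
  ring

theorem stmt_10 (d r : ℕ) (hd : 0 < d)
    (lam : Fin d → ℝ) (hlam : ∀ n, 0 ≤ lam n) (hnorm : ∑ n : Fin d, lam n ^ 2 = 1)
    (hsorted : ∀ i j : Fin d, i ≤ j → lam j ≤ lam i)
    (Φ : Fin d × Fin d → ℂ)
    (hΦ : ∀ p : Fin d × Fin d, Φ p = if p.1 = p.2 then ((lam p.1 : ℝ) : ℂ) else 0)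
    (ρ : Matrix (Fin d × Fin d) (Fin d × Fin d) ℂ)
    (hρ : ρ.PosSemidef) (htr : ρ.trace = 1)
    (hSN : SchmidtNumberLE d r ρ) :
    (star Φ ⬝ᵥ ρ *ᵥ Φ).re ≤ ∑ m : Fin d, (if m.val < r then lam m ^ 2 else 0) := by
  obtain ⟨N, p, ψ, hp, hnψ, hrank, hρeq⟩ := hSN
  -- the probabilities sum to 1
  have hps : ∑ i, p i = 1 := by
    have htr2 : (∑ i, (p i : ℂ)) = 1 := by
      rw [hρeq] at htr
      rw [Matrix.trace_sum] at htr
      rw [← htr]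
      refine Finset.sum_congr rfl fun i _ => ?_
      rw [Matrix.trace_smul]
      have h1 : (Matrix.vecMulVec (ψ i) (star (ψ i))).trace = 1 := by
        rw [← hnψ i]
        simp [Matrix.trace, Matrix.diag, Matrix.vecMulVec_apply, dotProduct,
          mul_comm]
      rw [h1, smul_eq_mul, mul_one]
    exact_mod_cast htr2
  -- expand fidelity
  have hexp := fid_expand d N (fun i => (p i : ℂ)) ψ Φ
  rw [hρeq, hexp]
  -- conjugate relation
  have hconj : ∀ i, star (ψ i) ⬝ᵥ Φ = (starRingEnd ℂ) (star Φ ⬝ᵥ ψ i) := by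
    intro i
    simp only [dotProduct, Pi.star_apply, RCLike.star_def, map_sum, _root_.map_mul,
      Complex.conj_conj]
    exact Finset.sum_congr rfl fun q _ => mul_comm _ _
  have hre : (∑ i, (p i : ℂ) * ((star Φ ⬝ᵥ ψ i) * (star (ψ i) ⬝ᵥ Φ))).re
      = ∑ i, p i * Complex.normSq (star Φ ⬝ᵥ ψ i) := by
    rw [Complex.re_sum]
    refine Finset.sum_congr rfl fun i _ => ?_
    rw [hconj i, Complex.mul_conj]
    norm_cast
  rw [hre]
  -- bound each term
  have hbound : ∀ i, Complex.normSq (star Φ ⬝ᵥ ψ i)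
      ≤ ∑ m : Fin d, (if m.val < r then lam m ^ 2 else 0) := by
    intro i
    obtain ⟨k, t, hk, ht0, ht1, htsum, hb⟩ :=
      pure_bound d r lam (ψ i) (hnψ i) (hrank i) Φ hΦ
    refine hb.trans (bathtub d r lam hlam hsorted t ht0 ht1 ?_)
    rw [htsum]
    exact_mod_cast hk
  calc ∑ i, p i * Complex.normSq (star Φ ⬝ᵥ ψ i)
      ≤ ∑ i, p i * ∑ m : Fin d, (if m.val < r then lam m ^ 2 else 0) :=
        Finset.sum_le_sum fun i _ => mul_le_mul_of_nonneg_left (hbound i) (hp i)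
    _ = ∑ m : Fin d, (if m.val < r then lam m ^ 2 else 0) := by
        rw [← Finset.sum_mul, hps, one_mul]
end

section
/- Let ρ be a density matrix on ℂ^d⊗ℂ^d with Schmidt number at most r, and |Φ⁺⟩ = (1/√d)Σ_m|mm⟩ the maximally entangled state. Then ⟨Φ⁺|ρ|Φ⁺⟩ ≤ r/d. Consequently, if ⟨Φ⁺|ρ|Φ⁺⟩ > r/d, then ρ has Schmidt number at least r+1. -/
open Matrix
open scoped ComplexOrder

lemma key_bound (d r : ℕ) (a b : Fin r → Fin d → ℂ)
    (ψ : Fin d × Fin d → ℂ)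
    (hψ : ∀ p : Fin d × Fin d, ψ p = ∑ i : Fin r, a i p.1 * b i p.2) :
    ‖∑ m : Fin d, ψ (m, m)‖ ^ 2 ≤ (r : ℝ) * ∑ p : Fin d × Fin d, ‖ψ p‖ ^ 2 := by
  classical
  set E := EuclideanSpace ℂ (Fin d)
  let a' : Fin r → E := fun i => WithLp.toLp 2 (a i)
  set U : Submodule ℂ E := Submodule.span ℂ (Set.range a') with hU
  set k := Module.finrank ℂ U with hkdef
  have hk : k ≤ r := by
    have h1 := finrank_span_le_card (R := ℂ) (Set.range a')
    rw [Set.toFinset_card] at h1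
    exact h1.trans ((Fintype.card_range_le a').trans (by simp))
  let v := stdOrthonormalBasis ℂ U
  let w : Fin k → E := fun j => (v j : E)
  have hworth : ∀ j j', (∑ m : Fin d, (starRingEnd ℂ) (w j m) * w j' m)
      = if j = j' then 1 else 0 := by
    intro j j'
    have h1 := orthonormal_iff_ite.mp v.orthonormal j j'
    rw [Submodule.coe_inner] at h1
    rw [← h1]
    rw [EuclideanSpace.inner_eq_star_dotProduct]
    simp [w, dotProduct, mul_comm]
  have hwnorm : ∀ j, (∑ m : Fin d, ‖w j m‖ ^ 2) = 1 := by
    intro j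
    have h1 := hworth j j
    simp only [if_true, eq_self_iff_true] at h1
    have h2 : ((∑ m : Fin d, ‖w j m‖ ^ 2 : ℝ) : ℂ) = 1 := by
      push_cast
      rw [← h1]
      exact Finset.sum_congr rfl fun m _ => by rw [Complex.conj_mul']
    exact_mod_cast h2
  -- coefficients
  let c : Fin r → Fin k → ℂ := fun i j =>
    v.repr ⟨a' i, Submodule.subset_span (Set.mem_range_self i)⟩ j
  have ha : ∀ i m, a i m = ∑ j : Fin k, c i j * w j m := by
    intro i m
    have h1 : (∑ j : Fin k, c i j • w j)
        = a' i := by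
      have h0 := v.sum_repr ⟨a' i, Submodule.subset_span (Set.mem_range_self i)⟩
      have h2 := congrArg (fun u : U => (u : E)) h0
      simpa [c, w] using h2
    have h2 : (∑ j : Fin k, c i j • w j) m = a' i m := congrArg (fun u : E => u m) h1
    have h3 : (∑ j : Fin k, (c i j • w j)) m = ∑ j : Fin k, (c i j • w j) m :=
      by rw [WithLp.ofLp_sum, Finset.sum_apply]
    rw [h3] at h2
    exact h2.symm
  let b' : Fin k → Fin d → ℂ := fun j n => ∑ i : Fin r, c i j * b i n
  have hpsi : ∀ m n, ψ (m, n) = ∑ j : Fin k, w j m * b' j n := by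
    intro m n
    rw [hψ (m, n)]
    have h1 : ∀ i : Fin r, a i m * b i n = ∑ j : Fin k, c i j * w j m * b i n := by
      intro i; rw [ha i m, Finset.sum_mul]
    rw [Finset.sum_congr rfl fun i _ => h1 i, Finset.sum_comm]
    refine Finset.sum_congr rfl fun j _ => ?_
    simp only [b', Finset.mul_sum]
    exact Finset.sum_congr rfl fun i _ => by ring
  -- the diagonal sum
  set T := ∑ m : Fin d, ψ (m, m) with hTdef
  set B := ∑ j : Fin k, ∑ n : Fin d, ‖b' j n‖ ^ 2 with hBdef
  have hBnn : ∀ j, (0:ℝ) ≤ ∑ n : Fin d, ‖b' j n‖ ^ 2 := fun j =>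
    Finset.sum_nonneg fun n _ => sq_nonneg _
  let β : Fin k → ℝ := fun j => Real.sqrt (∑ n : Fin d, ‖b' j n‖ ^ 2)
  have hβnn : ∀ j, 0 ≤ β j := fun j => Real.sqrt_nonneg _
  have hβsq : ∀ j, β j ^ 2 = ∑ n : Fin d, ‖b' j n‖ ^ 2 := fun j => Real.sq_sqrt (hBnn j)
  have hT : T = ∑ j : Fin k, ∑ m : Fin d, w j m * b' j m := by
    rw [hTdef, Finset.sum_comm]
    exact Finset.sum_congr rfl fun m _ => hpsi m m
  have step1 : ∀ j, ‖∑ m : Fin d, w j m * b' j m‖ ≤ β j := by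
    intro j
    have h1 : ‖∑ m : Fin d, w j m * b' j m‖ ≤ ∑ m : Fin d, ‖w j m‖ * ‖b' j m‖ := by
      refine (norm_sum_le _ _).trans ?_
      exact Finset.sum_le_sum fun m _ => by rw [norm_mul]
    have h2 := Finset.sum_mul_sq_le_sq_mul_sq Finset.univ
      (fun m : Fin d => ‖w j m‖) (fun m => ‖b' j m‖)
    rw [hwnorm j, one_mul] at h2
    have h3 : ∑ m : Fin d, ‖w j m‖ * ‖b' j m‖ ≤ β j := by
      have h4 : (0:ℝ) ≤ ∑ m : Fin d, ‖w j m‖ * ‖b' j m‖ :=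
        Finset.sum_nonneg fun m _ => mul_nonneg (norm_nonneg _) (norm_nonneg _)
      calc ∑ m : Fin d, ‖w j m‖ * ‖b' j m‖
          = Real.sqrt ((∑ m : Fin d, ‖w j m‖ * ‖b' j m‖) ^ 2) := (Real.sqrt_sq h4).symm
        _ ≤ β j := Real.sqrt_le_sqrt h2
    exact h1.trans h3
  have step2 : ‖T‖ ≤ ∑ j : Fin k, β j := by
    rw [hT]
    exact (norm_sum_le _ _).trans (Finset.sum_le_sum fun j _ => step1 j)
  have step3 : (∑ j : Fin k, β j) ^ 2 ≤ (k : ℝ) * B := by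
    have h2 := Finset.sum_mul_sq_le_sq_mul_sq Finset.univ
      (fun _ : Fin k => (1:ℝ)) β
    simp only [one_pow, one_mul, Finset.sum_const, Finset.card_univ, Fintype.card_fin,
      nsmul_eq_mul] at h2
    calc (∑ j : Fin k, β j) ^ 2 ≤ (k : ℝ) * ∑ j : Fin k, β j ^ 2 := by linarith [h2]
      _ = (k : ℝ) * B := by rw [hBdef]; congr 1; exact Finset.sum_congr rfl fun j _ => hβsq j
  have step4 : ∑ p : Fin d × Fin d, ‖ψ p‖ ^ 2 = B := by
    have h6 : ∀ n, (∑ m : Fin d, ‖ψ (m, n)‖ ^ 2) = ∑ j : Fin k, ‖b' j n‖ ^ 2 := by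
      intro n
      have hc : ((∑ m : Fin d, ‖ψ (m, n)‖ ^ 2 : ℝ) : ℂ)
          = ((∑ j : Fin k, ‖b' j n‖ ^ 2 : ℝ) : ℂ) := by
        push_cast
        calc ∑ m : Fin d, (‖ψ (m, n)‖ : ℂ) ^ 2
            = ∑ m : Fin d, (starRingEnd ℂ) (ψ (m, n)) * ψ (m, n) :=
              Finset.sum_congr rfl fun m _ => (Complex.conj_mul' _).symm
          _ = ∑ m : Fin d, ∑ j : Fin k, ∑ j' : Fin k,
                ((starRingEnd ℂ) (b' j n) * b' j' n) * ((starRingEnd ℂ) (w j m) * w j' m) := by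
              refine Finset.sum_congr rfl fun m _ => ?_
              rw [hpsi m n, map_sum, Finset.sum_mul_sum]
              exact Finset.sum_congr rfl fun j _ => Finset.sum_congr rfl fun j' _ => by
                rw [RingHom.map_mul]; ring
          _ = ∑ j : Fin k, ∑ j' : Fin k,
                ((starRingEnd ℂ) (b' j n) * b' j' n) * ∑ m : Fin d,
                  (starRingEnd ℂ) (w j m) * w j' m := by
              rw [Finset.sum_comm]
              refine Finset.sum_congr rfl fun j _ => ?_
              rw [Finset.sum_comm]
              exact Finset.sum_congr rfl fun j' _ => (Finset.mul_sum _ _ _).symm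
          _ = ∑ j : Fin k, (starRingEnd ℂ) (b' j n) * b' j n := by
              refine Finset.sum_congr rfl fun j _ => ?_
              simp only [hworth, mul_ite, mul_one, mul_zero]
              simp
          _ = ∑ j : Fin k, (‖b' j n‖ : ℂ) ^ 2 :=
              Finset.sum_congr rfl fun j _ => Complex.conj_mul' _
      exact_mod_cast hc
    calc ∑ p : Fin d × Fin d, ‖ψ p‖ ^ 2
        = ∑ n : Fin d, ∑ m : Fin d, ‖ψ (m, n)‖ ^ 2 := by
          rw [Fintype.sum_prod_type, Finset.sum_comm]
      _ = ∑ n : Fin d, ∑ j : Fin k, ‖b' j n‖ ^ 2 := Finset.sum_congr rfl fun n _ => h6 n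
      _ = B := by rw [hBdef, Finset.sum_comm]
  have hBnn' : (0:ℝ) ≤ B := Finset.sum_nonneg fun j _ => hBnn j
  calc ‖T‖ ^ 2 ≤ (∑ j : Fin k, β j) ^ 2 := by
        have := step2
        have h0 : (0:ℝ) ≤ ‖T‖ := norm_nonneg _
        nlinarith
    _ ≤ (k : ℝ) * B := step3
    _ ≤ (r : ℝ) * B := by
        have : (k:ℝ) ≤ (r:ℝ) := by exact_mod_cast hk
        nlinarith
    _ = (r : ℝ) * ∑ p : Fin d × Fin d, ‖ψ p‖ ^ 2 := by rw [step4]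

lemma pure_bound_s11 (d r : ℕ) (ψ : Fin d × Fin d → ℂ)
    (hnorm : star ψ ⬝ᵥ ψ = 1) (h : SchmidtRankLE d r ψ) :
    ‖∑ m : Fin d, ψ (m, m)‖ ^ 2 ≤ (r : ℝ) := by
  obtain ⟨a, b, hab⟩ := h
  have h1 := key_bound d r a b ψ hab
  have h2 : (∑ p : Fin d × Fin d, ‖ψ p‖ ^ 2) = 1 := by
    have h3 : ((∑ p : Fin d × Fin d, ‖ψ p‖ ^ 2 : ℝ) : ℂ) = 1 := by
      push_cast
      rw [← hnorm]
      simp only [dotProduct, Pi.star_apply]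
      exact Finset.sum_congr rfl fun p _ => (Complex.conj_mul' _).symm
    exact_mod_cast h3
  rw [h2, mul_one] at h1
  exact h1

theorem stmt_11 (d r : ℕ) (hd : 0 < d)
    (Φ : Fin d × Fin d → ℂ)
    (hΦ : ∀ p : Fin d × Fin d,
      Φ p = if p.1 = p.2 then ((1 / Real.sqrt d : ℝ) : ℂ) else 0)
    (ρ : Matrix (Fin d × Fin d) (Fin d × Fin d) ℂ)
    (hρ : ρ.PosSemidef) (htr : ρ.trace = 1) :
    (SchmidtNumberLE d r ρ → (star Φ ⬝ᵥ ρ *ᵥ Φ).re ≤ (r : ℝ) / d) ∧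
    ((r : ℝ) / d < (star Φ ⬝ᵥ ρ *ᵥ Φ).re → ¬ SchmidtNumberLE d r ρ) := by
  have main : SchmidtNumberLE d r ρ → (star Φ ⬝ᵥ ρ *ᵥ Φ).re ≤ (r : ℝ) / d := by
    rintro ⟨N, p, ψ, hp, hn, hr, hdecomp⟩
    have hΦreal : ∀ q, (starRingEnd ℂ) (Φ q) = Φ q := by
      intro q; rw [hΦ q]; split <;> simp
    -- sum of weights is one
    have hsum : ∑ i : Fin N, p i = 1 := by
      have h1 : ρ.trace = ∑ i : Fin N, (p i : ℂ) := by
        rw [hdecomp, Matrix.trace_sum]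
        refine Finset.sum_congr rfl fun i _ => ?_
        rw [Matrix.trace_smul]
        have h2 : (Matrix.vecMulVec (ψ i) (star (ψ i))).trace = 1 := by
          rw [Matrix.trace]
          have : ∀ q, (Matrix.vecMulVec (ψ i) (star (ψ i))).diag q
              = ψ i q * (starRingEnd ℂ) (ψ i q) := fun q => rfl
          rw [Finset.sum_congr rfl fun q _ => this q]
          rw [← hn i]
          simp only [dotProduct, Pi.star_apply]
          exact Finset.sum_congr rfl fun q _ => by rw [Complex.star_def]; ring
        rw [h2, smul_eq_mul, mul_one]
      rw [htr] at h1
      have h3 : ((∑ i : Fin N, p i : ℝ) : ℂ) = 1 := by push_cast; exact h1.symm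
      exact_mod_cast h3
    -- the quadratic form
    set c : Fin N → ℂ := fun i => star Φ ⬝ᵥ ψ i with hc
    have hform : star Φ ⬝ᵥ ρ *ᵥ Φ = ∑ i : Fin N, (p i : ℂ) * (c i * (starRingEnd ℂ) (c i)) := by
      rw [hdecomp]
      have hsv : (∑ i : Fin N, (p i : ℂ) • Matrix.vecMulVec (ψ i) (star (ψ i))) *ᵥ Φ
          = ∑ i : Fin N, ((p i : ℂ) • Matrix.vecMulVec (ψ i) (star (ψ i))) *ᵥ Φ := by
        ext q
        simp only [Matrix.mulVec, dotProduct, Matrix.sum_apply, Finset.sum_mul,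
          Finset.sum_apply]
        rw [Finset.sum_comm]
      rw [hsv]
      have hds : star Φ ⬝ᵥ (∑ i : Fin N, ((p i : ℂ) • Matrix.vecMulVec (ψ i) (star (ψ i))) *ᵥ Φ)
          = ∑ i : Fin N, star Φ ⬝ᵥ (((p i : ℂ) • Matrix.vecMulVec (ψ i) (star (ψ i))) *ᵥ Φ) := by
        simp only [dotProduct, Finset.sum_apply, Finset.mul_sum]
        rw [Finset.sum_comm]
      rw [hds]
      refine Finset.sum_congr rfl fun i _ => ?_
      rw [Matrix.smul_mulVec, dotProduct_smul, smul_eq_mul]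
      congr 1
      have hA : Matrix.vecMulVec (ψ i) (star (ψ i)) *ᵥ Φ
          = (star (ψ i) ⬝ᵥ Φ) • ψ i := by
        ext m
        simp only [Matrix.mulVec, dotProduct, Matrix.vecMulVec_apply, Pi.smul_apply,
          Pi.star_apply, smul_eq_mul]
        rw [Finset.sum_mul]
        exact Finset.sum_congr rfl fun q _ => by ring
      rw [hA, dotProduct_smul, smul_eq_mul]
      have hB : star (ψ i) ⬝ᵥ Φ = (starRingEnd ℂ) (c i) := by
        rw [hc]
        simp only [dotProduct, Pi.star_apply, map_sum]
        refine Finset.sum_congr rfl fun q _ => ?_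
        rw [RingHom.map_mul]
        simp only [Pi.star_apply, Complex.star_def, Complex.conj_conj]
        ring
      rw [hB]; ring
    -- value of c i
    have hcval : ∀ i, c i = ((1 / Real.sqrt d : ℝ) : ℂ) * ∑ m : Fin d, ψ i (m, m) := by
      intro i
      rw [hc]
      simp only [dotProduct, Pi.star_apply]
      rw [Fintype.sum_prod_type]
      rw [Finset.mul_sum]
      refine Finset.sum_congr rfl fun m _ => ?_
      rw [Finset.sum_eq_single m]
      · rw [hΦ (m, m)]; simp
      · intro n _ hne
        rw [hΦ (m, n)]
        simp [Ne.symm hne]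
      · simp
    have hd' : (0:ℝ) < d := by exact_mod_cast hd
    have hcbound : ∀ i, ‖c i‖ ^ 2 ≤ (r : ℝ) / d := by
      intro i
      rw [hcval i, norm_mul, mul_pow]
      have h1 : ‖((1 / Real.sqrt d : ℝ) : ℂ)‖ ^ 2 = 1 / d := by
        rw [Complex.norm_real, Real.norm_eq_abs, ← abs_pow, div_pow, one_pow,
          Real.sq_sqrt hd'.le, abs_of_nonneg (by positivity)]
      rw [h1]
      have h2 := pure_bound_s11 d r (ψ i) (hn i) (hr i)
      rw [div_mul_eq_mul_div, one_mul, div_le_div_iff₀ (by positivity) hd']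
      nlinarith
    rw [hform]
    rw [Complex.re_sum]
    have hterm : ∀ i, ((p i : ℂ) * (c i * (starRingEnd ℂ) (c i))).re
        = p i * ‖c i‖ ^ 2 := by
      intro i
      rw [Complex.mul_conj']
      have h9 : (p i : ℂ) * ((‖c i‖ : ℂ) ^ 2) = ((p i * ‖c i‖ ^ 2 : ℝ) : ℂ) := by
        push_cast; ring
      rw [h9, Complex.ofReal_re]
    rw [Finset.sum_congr rfl fun i _ => hterm i]
    calc ∑ i : Fin N, p i * ‖c i‖ ^ 2
        ≤ ∑ i : Fin N, p i * ((r:ℝ)/d) :=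
          Finset.sum_le_sum fun i _ => mul_le_mul_of_nonneg_left (hcbound i) (hp i)
      _ = (∑ i : Fin N, p i) * ((r:ℝ)/d) := (Finset.sum_mul _ _ _).symm
      _ = (r:ℝ)/d := by rw [hsum, one_mul]
  exact ⟨main, fun hlt hS => absurd (main hS) (not_le.mpr hlt)⟩
end
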